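/- Let c be the complex Banach space of convergent sequences with the supremum norm, and let L ∈ c* be the norm-one functional L((c_n)_n) = lim_{n→∞} c_n. If ε > 0 and S : c → c is a finite rank bounded linear operator with ‖(S* - I_{c*})L‖ < ε, then ‖S - I_c‖ ≥ 2 - ε. -/

import Mathlib

open Metric Filter Topology

namespace ClusterValue

variable (X : Type*) [NormedAddCommGroup X] [NormedSpace ℂ X]

/-- Membership in `A_u(B)`: analytic on the open unit ball, bounded there,
and uniformly continuous there. -/
def MemAu (f : X → ℂ) : Prop :=
  AnalyticOn ℂ f (ball (0 : X) 1) ∧ (∃ C : ℝ, ∀ x ∈ ball (0 : X) 1, ‖f x‖ ≤ C) ∧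
    UniformContinuousOn f (ball (0 : X) 1)

/-- Membership in `H^∞(B)`: analytic on the open unit ball and bounded there. -/
def MemHinf (f : X → ℂ) : Prop :=
  AnalyticOn ℂ f (ball (0 : X) 1) ∧ (∃ C : ℝ, ∀ x ∈ ball (0 : X) 1, ‖f x‖ ≤ C)

/-- A character (nonzero continuous multiplicative linear functional) of the algebra
of functions on the open unit ball of `X` determined by the membership predicate `Mem`.
Functions are identified when they agree on the ball. -/
structure Character (Mem : (X → ℂ) → Prop) : Type _ where
  toFun : (X → ℂ) → ℂ
  congr' : ∀ f g, Mem f → Mem g → (∀ x ∈ ball (0 : X) 1, f x = g x) → toFun f = toFun g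
  map_add' : ∀ f g, Mem f → Mem g → toFun (f + g) = toFun f + toFun g
  map_mul' : ∀ f g, Mem f → Mem g → toFun (f * g) = toFun f * toFun g
  map_smul' : ∀ (c : ℂ) (f), Mem f → toFun (c • f) = c * toFun f
  map_one' : toFun 1 = 1
  continuous' : ∃ C : ℝ, ∀ (f : X → ℂ) (M : ℝ), Mem f →
    (∀ x ∈ ball (0 : X) 1, ‖f x‖ ≤ M) → ‖toFun f‖ ≤ C * M

variable {X}

/-- The fiber over `0`: characters annihilating all continuous linear functionals. -/
def Character.inFiberZero {Mem : (X → ℂ) → Prop} (τ : Character X Mem) : Prop :=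
  ∀ φ : X →L[ℂ] ℂ, τ.toFun ⇑φ = 0

/-- The fiber over `x'' ∈ X**`. -/
def Character.inFiber {Mem : (X → ℂ) → Prop} (τ : Character X Mem)
    (x'' : (X →L[ℂ] ℂ) →L[ℂ] ℂ) : Prop :=
  ∀ φ : X →L[ℂ] ℂ, τ.toFun ⇑φ = x'' φ

variable (X)

/-- The cluster set of `f` at `0`: limits of `f` along weakly null nets (filters) in the ball. -/
def clusterSetZero (f : X → ℂ) : Set ℂ :=
  {z | ∃ l : Filter X, l.NeBot ∧ l ≤ 𝓟 (ball (0 : X) 1) ∧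
    (∀ φ : X →L[ℂ] ℂ, Tendsto (fun x => φ x) l (𝓝 0)) ∧ Tendsto f l (𝓝 z)}

/-- The cluster set of `f` at `x'' ∈ X**`: limits of `f` along nets in the ball converging
weak-star to `x''`. -/
def clusterSet (f : X → ℂ) (x'' : (X →L[ℂ] ℂ) →L[ℂ] ℂ) : Set ℂ :=
  {z | ∃ l : Filter X, l.NeBot ∧ l ≤ 𝓟 (ball (0 : X) 1) ∧
    (∀ φ : X →L[ℂ] ℂ, Tendsto (fun x => φ x) l (𝓝 (x'' φ))) ∧ Tendsto f l (𝓝 z)}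

/-- A finite rank (bounded linear) operator. -/
def FiniteRank (S : X →L[ℂ] X) : Prop :=
  FiniteDimensional ℂ ↥(LinearMap.range (S : X →ₗ[ℂ] X))

/-- Finite type polynomials: the subalgebra of functions generated by the
continuous linear functionals (and constants). -/
def IsFiniteTypePoly (p : X → ℂ) : Prop :=
  p ∈ Algebra.adjoin ℂ (Set.range fun φ : X →L[ℂ] ℂ => (⇑φ : X → ℂ))

/-- Membership in `A(B)`: uniform limits on the ball of finite type polynomials. -/
def MemA (f : X → ℂ) : Prop :=
  ∀ ε > (0 : ℝ), ∃ p : X → ℂ, IsFiniteTypePoly X p ∧ ∀ x ∈ ball (0 : X) 1, ‖f x - p x‖ ≤ ε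

/-- A continuous polynomial: a finite sum of (diagonals of) continuous multilinear maps. -/
def IsContPoly (p : X → ℂ) : Prop :=
  ∃ (N : ℕ) (M : ∀ k : ℕ, ContinuousMultilinearMap ℂ (fun _ : Fin k => X) ℂ),
    ∀ x, p x = ∑ k ∈ Finset.range N, M k (fun _ => x)

end ClusterValue

namespace ClusterValue

open Filter Topology ENNReal

/-- The space `c` of convergent sequences, as a (closed) subspace of `ℓ∞`. -/
noncomputable def convSeq : Submodule ℂ (lp (fun _ : ℕ => ℂ) ∞) where
  carrier := {x | ∃ l : ℂ, Tendsto (fun n => x n) atTop (𝓝 l)}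
  add_mem' := by
    rintro x y ⟨l, hl⟩ ⟨m, hm⟩
    exact ⟨l + m, by simpa using hl.add hm⟩
  zero_mem' := ⟨0, by simp [tendsto_const_nhds]⟩
  smul_mem' := by
    rintro c x ⟨l, hl⟩
    refine ⟨c * l, ?_⟩
    simpa using (hl.const_mul c)

end ClusterValue

set_option maxHeartbeats 1600000 in
set_option synthInstance.maxHeartbeats 1000000 in
open Metric Filter Topology ENNReal ClusterValue in
/-- If `L ∈ c*` is the functional `L x = lim x`, `ε > 0`, and `S : c → c` is a finite rank
operator with `‖(S* - I)L‖ < ε`, then `‖S - I‖ ≥ 2 - ε`. -/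
theorem statement6 (ε : ℝ) (hε : 0 < ε)
    (L : ↥convSeq →L[ℂ] ℂ)
    (hL : ∀ (x : ↥convSeq) (l : ℂ),
      Tendsto (fun n => (x : lp (fun _ : ℕ => ℂ) ∞) n) atTop (𝓝 l) → L x = l)
    (S : ↥convSeq →L[ℂ] ↥convSeq) (hS : FiniteRank ↥convSeq S)
    (hSL : ‖L.comp S - L‖ < ε) :
    2 - ε ≤ ‖S - ContinuousLinearMap.id ℂ ↥convSeq‖ := by
  obtain ⟨C, hCdef, hCε⟩ : ∃ C : ℝ, ‖L.comp S - L‖ = C ∧ C < ε := ⟨_, rfl, hSL⟩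
  have hC0 : 0 ≤ C := hCdef ▸ norm_nonneg (L.comp S - L)
  set T := S - ContinuousLinearMap.id ℂ ↥convSeq with hT
  -- the test vectors
  have hmem : ∀ N : ℕ, Memℓp (fun n : ℕ => if n < N then (-1 : ℂ) else 1) ∞ := by
    intro N
    apply memℓp_infty
    refine ⟨1, ?_⟩
    rintro r ⟨n, rfl⟩
    by_cases h : n < N <;> simp [h]
  set xL : ℕ → lp (fun _ : ℕ => ℂ) ∞ := fun N => ⟨_, hmem N⟩ with hxL
  have hxLcoord : ∀ N n : ℕ, xL N n = if n < N then (-1 : ℂ) else 1 := fun N n => rfl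
  have hconv : ∀ N, xL N ∈ convSeq := by
    intro N
    refine ⟨1, ?_⟩
    refine Tendsto.congr' ?_ tendsto_const_nhds
    filter_upwards [eventually_ge_atTop N] with n hn
    simp [hxLcoord, Nat.not_lt.mpr hn]
  set x : ℕ → ↥convSeq := fun N => ⟨xL N, hconv N⟩ with hx
  have hxnorm : ∀ N, ‖x N‖ ≤ 1 := by
    intro N
    show ‖xL N‖ ≤ 1
    apply lp.norm_le_of_forall_le' 1
    intro i
    by_cases h : i < N <;> simp [hxLcoord, h]
  have hLx : ∀ N, L (x N) = 1 := by
    intro N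
    refine hL (x N) 1 ?_
    refine Tendsto.congr' ?_ tendsto_const_nhds
    filter_upwards [eventually_ge_atTop N] with n hn
    simp [hx, hxLcoord, Nat.not_lt.mpr hn]
  have hLS : ∀ N, ‖L (S (x N)) - 1‖ ≤ C := by
    intro N
    have h1 := (L.comp S - L).le_opNorm (x N)
    have h2 : (L.comp S - L) (x N) = L (S (x N)) - 1 := by
      simp [hLx N]
    rw [h2, hCdef] at h1
    calc ‖L (S (x N)) - 1‖ ≤ C * ‖x N‖ := h1
      _ ≤ C * 1 := by gcongr; exact hxnorm N
      _ = C := mul_one C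
  -- compactness of the range
  haveI hfd : FiniteDimensional ℂ ↥(LinearMap.range (S : ↥convSeq →ₗ[ℂ] ↥convSeq)) := hS
  haveI : ProperSpace ↥(LinearMap.range (S : ↥convSeq →ₗ[ℂ] ↥convSeq)) :=
    FiniteDimensional.proper ℂ ↥(LinearMap.range (S : ↥convSeq →ₗ[ℂ] ↥convSeq))
  set y : ℕ → ↥(LinearMap.range (S : ↥convSeq →ₗ[ℂ] ↥convSeq)) :=
    fun N => ⟨S (x N), LinearMap.mem_range_self _ _⟩ with hy
  have hyb : ∀ N, y N ∈ closedBall (0 : ↥(LinearMap.range (S : ↥convSeq →ₗ[ℂ] ↥convSeq))) ‖S‖ := by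
    intro N
    rw [mem_closedBall_zero_iff]
    show ‖S (x N)‖ ≤ ‖S‖
    calc ‖S (x N)‖ ≤ ‖S‖ * ‖x N‖ := S.le_opNorm (x N)
      _ ≤ ‖S‖ * 1 := by gcongr; exact hxnorm N
      _ = ‖S‖ := mul_one _
  obtain ⟨a, -, ψ, hψ, hlim⟩ :=
    (isCompact_closedBall (0 : ↥(LinearMap.range (S : ↥convSeq →ₗ[ℂ] ↥convSeq))) ‖S‖).tendsto_subseq hyb
  set v : ↥convSeq := (a : ↥convSeq) with hv
  have hvlim : Tendsto (fun k => S (x (ψ k))) atTop (𝓝 v) :=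
    (continuous_subtype_val.tendsto a).comp hlim
  obtain ⟨lv, hlv⟩ := v.2
  have hLv : L v = lv := hL v lv hlv
  have h1 : ‖lv - 1‖ ≤ C := by
    have ht : Tendsto (fun k => ‖L (S (x (ψ k))) - 1‖) atTop (𝓝 ‖L v - 1‖) :=
      (((L.continuous.tendsto v).comp hvlim).sub_const 1).norm
    rw [hLv] at ht
    exact le_of_tendsto ht (Eventually.of_forall fun k => hLS (ψ k))
  -- main estimate
  suffices h : ∀ δ : ℝ, 0 < δ → 2 - C - δ ≤ ‖T‖ by
    have h2 := h (ε - C) (by linarith)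
    linarith
  intro δ hδ
  rw [Metric.tendsto_atTop] at hlv hvlim
  obtain ⟨n0, hn0⟩ := hlv (δ / 2) (by linarith)
  obtain ⟨k0, hk0⟩ := hvlim (δ / 2) (by linarith)
  obtain ⟨k, hk1, hk2⟩ : ∃ k, k0 ≤ k ∧ n0 < ψ k :=
    ⟨max k0 (n0 + 1), le_max_left _ _,
      Nat.lt_of_lt_of_le (Nat.lt_succ_self n0)
        (le_trans (le_max_right k0 (n0 + 1)) hψ.le_apply)⟩
  have hNn0 : n0 < ψ k := hk2
  -- coordinate computation
  have hTx : ((T (x (ψ k)) : lp (fun _ : ℕ => ℂ) ∞) : ℕ → ℂ) n0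
      = ((S (x (ψ k)) : lp (fun _ : ℕ => ℂ) ∞) : ℕ → ℂ) n0 + 1 := by
    have he : T (x (ψ k)) = S (x (ψ k)) - x (ψ k) := by
      rw [hT]; rfl
    rw [he]
    have hc : (((S (x (ψ k)) - x (ψ k) : ↥convSeq) : lp (fun _ : ℕ => ℂ) ∞) : ℕ → ℂ) n0
        = ((S (x (ψ k)) : lp (fun _ : ℕ => ℂ) ∞) : ℕ → ℂ) n0
          - ((x (ψ k) : lp (fun _ : ℕ => ℂ) ∞) : ℕ → ℂ) n0 := by
      simp
    rw [hc]
    have hxc : ((x (ψ k) : lp (fun _ : ℕ => ℂ) ∞) : ℕ → ℂ) n0 = -1 := by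
      simp [hx, hxLcoord, hNn0]
    rw [hxc]; ring
  have hcoord1 : ‖((S (x (ψ k)) : lp (fun _ : ℕ => ℂ) ∞) : ℕ → ℂ) n0
      - ((v : lp (fun _ : ℕ => ℂ) ∞) : ℕ → ℂ) n0‖ ≤ δ / 2 := by
    have hd := hk0 k hk1
    rw [dist_eq_norm] at hd
    have hsub : ((S (x (ψ k)) : lp (fun _ : ℕ => ℂ) ∞) : ℕ → ℂ) n0
        - ((v : lp (fun _ : ℕ => ℂ) ∞) : ℕ → ℂ) n0
        = (((S (x (ψ k)) - v : ↥convSeq) : lp (fun _ : ℕ => ℂ) ∞) : ℕ → ℂ) n0 := by simp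
    rw [hsub]
    calc ‖(((S (x (ψ k)) - v : ↥convSeq) : lp (fun _ : ℕ => ℂ) ∞) : ℕ → ℂ) n0‖
        ≤ ‖((S (x (ψ k)) - v : ↥convSeq) : lp (fun _ : ℕ => ℂ) ∞)‖ :=
          lp.norm_apply_le_norm ENNReal.top_ne_zero _ n0
      _ = ‖S (x (ψ k)) - v‖ := rfl
      _ ≤ δ / 2 := le_of_lt hd
  have hcoord2 : ‖((v : lp (fun _ : ℕ => ℂ) ∞) : ℕ → ℂ) n0 - lv‖ ≤ δ / 2 := by
    have hd := hn0 n0 le_rfl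
    rw [Complex.dist_eq] at hd
    exact le_of_lt hd
  have hlv1 : 2 - C ≤ ‖lv + 1‖ := by
    have he : (lv + 1 : ℂ) = 2 + (lv - 1) := by ring
    rw [he]
    have h3 := norm_sub_norm_le (2 : ℂ) (-(lv - 1))
    have h4 : ((2 : ℂ) - -(lv - 1)) = 2 + (lv - 1) := by ring
    rw [h4, norm_neg] at h3
    have h5 : ‖(2 : ℂ)‖ = 2 := by norm_num
    rw [h5] at h3
    linarith
  have hmain : 2 - C - δ ≤ ‖((T (x (ψ k)) : lp (fun _ : ℕ => ℂ) ∞) : ℕ → ℂ) n0‖ := by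
    rw [hTx]
    set w1 : ℂ := ((S (x (ψ k)) : lp (fun _ : ℕ => ℂ) ∞) : ℕ → ℂ) n0
      - ((v : lp (fun _ : ℕ => ℂ) ∞) : ℕ → ℂ) n0 with hw1
    set w2 : ℂ := ((v : lp (fun _ : ℕ => ℂ) ∞) : ℕ → ℂ) n0 - lv with hw2
    have he : (((S (x (ψ k)) : lp (fun _ : ℕ => ℂ) ∞) : ℕ → ℂ) n0 + 1 : ℂ)
        = (lv + 1) + (w1 + w2) := by rw [hw1, hw2]; ring
    rw [he]
    have h3 := norm_sub_norm_le ((lv + 1) : ℂ) (-(w1 + w2))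
    have h4 : ((lv + 1) - -(w1 + w2) : ℂ) = (lv + 1) + (w1 + w2) := by ring
    rw [h4, norm_neg] at h3
    have h5 : ‖(w1 + w2 : ℂ)‖ ≤ δ := le_trans (norm_add_le w1 w2) (by linarith)
    linarith
  calc 2 - C - δ ≤ ‖((T (x (ψ k)) : lp (fun _ : ℕ => ℂ) ∞) : ℕ → ℂ) n0‖ := hmain
    _ ≤ ‖(T (x (ψ k)) : lp (fun _ : ℕ => ℂ) ∞)‖ :=
        lp.norm_apply_le_norm ENNReal.top_ne_zero _ n0
    _ = ‖T (x (ψ k))‖ := rfl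
    _ ≤ ‖T‖ * ‖x (ψ k)‖ := T.le_opNorm (x (ψ k))
    _ ≤ ‖T‖ * 1 := by gcongr; exact hxnorm (ψ k)
    _ = ‖T‖ := mul_one _
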